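/- Assume R = DV is obtained by the lazy reduction of the cone filtration boundary matrix. Let (σ,τ̄) be a persistence pair pairing a base simplex σ with a cone simplex τ̄ = ω∗τ, with min σ = d > b = max τ (low R[τ̄] = σ). Then every base simplex appearing with nonzero coefficient in column V[τ̄] lies in K_{≥b}, i.e., V[τ̄] ∩ K ⊆ K_{≥b}. -/

import Mathlib

open Finsupp
open scoped Classical

/-- A finite Δ-complex over a field `F`: each cell has a dimension, a boundary chain,
and an integer support interval `T(σ) = [tmin σ, tmax σ] ⊆ [0, n]`; whenever `σ` appears
in `∂τ` one has `tmin σ < tmin τ < tmax τ < tmax σ`. -/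
structure DeltaComplex (F : Type) [Field F] (n : ℤ) where
  Cell : Type
  deq : DecidableEq Cell
  fin : Fintype Cell
  dim : Cell → ℕ
  tmin : Cell → ℤ
  tmax : Cell → ℤ
  bdry : Cell → (Cell →₀ F)
  tmin_nonneg : ∀ σ, 0 ≤ tmin σ
  tmin_lt_tmax : ∀ σ, tmin σ < tmax σ
  tmax_le : ∀ σ, tmax σ ≤ n
  bdry_dim : ∀ τ σ, bdry τ σ ≠ 0 → dim σ + 1 = dim τ
  nest : ∀ τ σ, bdry τ σ ≠ 0 → tmin σ < tmin τ ∧ tmax τ < tmax σ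
  bdry_bdry : ∀ τ, ((bdry τ).sum fun σ a => a • bdry σ) = 0

attribute [instance] DeltaComplex.deq DeltaComplex.fin

variable {F : Type} [Field F] {n : ℤ}

/-- The boundary of a chain of `K`. -/
noncomputable def bd (K : DeltaComplex F n) (c : K.Cell →₀ F) : K.Cell →₀ F :=
  c.sum fun τ a => a • K.bdry τ

/-- A chain is supported on a set of cells. -/
def SuppOn {α β : Type} [Zero β] (c : α →₀ β) (S : α → Prop) : Prop :=
  ∀ x, c x ≠ 0 → S x

/-- Cells of the prism `K̂`: vertical cells `σ×{i}` and horizontal cells `σ×[i,i+1]`. -/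
inductive PCell (C : Type) where
  | vert : C → ℤ → PCell C
  | horiz : C → ℤ → PCell C
deriving DecidableEq

/-- Membership of a prism cell in the prism `K̂`. -/
def inPrism (K : DeltaComplex F n) : PCell K.Cell → Prop
  | .vert σ i => K.tmin σ ≤ i ∧ i ≤ K.tmax σ
  | .horiz σ i => K.tmin σ ≤ i ∧ i + 1 ≤ K.tmax σ

/-- Membership of a prism cell in the interlevel subcomplex `K̂_i^j` (cells `σ×T` with
`T ⊆ [i,j]`). -/
def inSub (K : DeltaComplex F n) (i j : ℤ) : PCell K.Cell → Prop
  | .vert σ t => (K.tmin σ ≤ t ∧ t ≤ K.tmax σ) ∧ i ≤ t ∧ t ≤ j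
  | .horiz σ t => (K.tmin σ ≤ t ∧ t + 1 ≤ K.tmax σ) ∧ i ≤ t ∧ t + 1 ≤ j

/-- The boundary of a single prism cell: `∂(τ×i) = (∂τ)×i` and
`∂(σ×[i,i+1]) = σ×(i+1) − σ×i − (∂σ)×[i,i+1]`. -/
noncomputable def pcellBd (K : DeltaComplex F n) : PCell K.Cell → (PCell K.Cell →₀ F)
  | .vert τ i => (K.bdry τ).sum fun σ a => Finsupp.single (PCell.vert σ i) a
  | .horiz σ i =>
      Finsupp.single (PCell.vert σ (i + 1)) 1 - Finsupp.single (PCell.vert σ i) 1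
        - (K.bdry σ).sum fun ρ a => Finsupp.single (PCell.horiz ρ i) a

/-- The boundary of a prism chain. -/
noncomputable def pbd (K : DeltaComplex F n) (c : PCell K.Cell →₀ F) : PCell K.Cell →₀ F :=
  c.sum fun x a => a • pcellBd K x

/-- `z` is a relative cycle of the pair of subcomplexes `(A, B)` of the prism. -/
def RelCycle (K : DeltaComplex F n) (A B : PCell K.Cell → Prop)
    (z : PCell K.Cell →₀ F) : Prop :=
  SuppOn z A ∧ SuppOn (pbd K z) B

/-- The homology class `[z] ∈ H(A,B)` lies in the image of the map
`H(A',B') → H(A,B)` induced by the inclusion of pairs `(A',B') ⊆ (A,B)`: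
there is a relative cycle `α` of `(A',B')` homologous to `z` within `(A,B)`. -/
def InImg (K : DeltaComplex F n) (A' B' A B : PCell K.Cell → Prop)
    (z : PCell K.Cell →₀ F) : Prop :=
  ∃ α β γ : PCell K.Cell →₀ F,
    RelCycle K A' B' α ∧ SuppOn β A ∧ SuppOn γ B ∧ z = α + pbd K β + γ

/-- The vertical prism chain `w × t`. -/
noncomputable def vchain (K : DeltaComplex F n) (w : K.Cell →₀ F) (t : ℤ) :
    PCell K.Cell →₀ F :=
  w.sum fun σ a => Finsupp.single (PCell.vert σ t) a

/-- A valid choice of times for Lift-Cycle: for every simplex `τ` of `z` with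
`T(τ) ∩ [b,d] ≠ ∅`, the chosen time satisfies `t τ ∈ T(τ) ∩ [b,d]`. -/
def ValidTimes (K : DeltaComplex F n) (z : K.Cell →₀ F) (b d : ℤ) (t : K.Cell → ℤ) : Prop :=
  ∀ τ, z τ ≠ 0 → K.tmin τ ≤ d → b ≤ K.tmax τ →
    K.tmin τ ≤ t τ ∧ t τ ≤ K.tmax τ ∧ b ≤ t τ ∧ t τ ≤ d

/-- The chain `ẑ` produced by `Lift-Cycle(z, (s,f), w₀)` with the choice of times `t`
(here `b = min s f`, `d = max s f`): the sum of the vertical cells `⟨τ,z⟩·(τ×t_τ)` over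
simplices `τ` of `z` with `T(τ) ∩ [b,d] ≠ ∅`, plus horizontal cells `σ×[k,k+1]`
(oriented from `s` to `f`) whose coefficient is the running sum
`⟨σ,w₀⟩ + Σ ⟨τ,z⟩·⟨σ,∂τ⟩` over the cofaces `τ` whose time `t_τ` has already been passed
when traversing from `s` to `f`. -/
noncomputable def liftCycle (K : DeltaComplex F n) (z : K.Cell →₀ F) (s f : ℤ)
    (w0 : K.Cell →₀ F) (t : K.Cell → ℤ) : PCell K.Cell →₀ F :=
  (∑ τ ∈ z.support.filter (fun τ => K.tmin τ ≤ max s f ∧ min s f ≤ K.tmax τ),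
      Finsupp.single (PCell.vert τ (t τ)) (z τ))
  + ∑ σ : K.Cell, ∑ k ∈ Finset.Icc (min s f) (max s f - 1),
      Finsupp.single (PCell.horiz σ k)
        ((if s ≤ f then (1 : F) else -1) *
          (w0 σ +
            ∑ τ ∈ z.support.filter (fun τ =>
                (K.tmin τ ≤ max s f ∧ min s f ≤ K.tmax τ) ∧
                  (if s ≤ f then t τ ≤ k else k + 1 ≤ t τ)),
              z τ * (K.bdry τ) σ))

/-- Cells of the cone `K̄ = ω ∗ K`: base simplices, the cone vertex `ω`,
and cone simplices `σ̄ = ω ∗ σ`. -/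
inductive CCell (C : Type) where
  | base : C → CCell C
  | omega : CCell C
  | cone : C → CCell C
deriving DecidableEq

/-- Boundary of a single cell of the cone `K̄`:
`∂σ` for base simplices, `0` for `ω`, and `∂(ω∗σ) = σ − ω∗∂σ` (minus `ω` when `σ` is a
vertex) for cone simplices. -/
noncomputable def ccellBd (K : DeltaComplex F n) : CCell K.Cell → (CCell K.Cell →₀ F)
  | .base σ => (K.bdry σ).sum fun ρ a => Finsupp.single (CCell.base ρ) a
  | .omega => 0
  | .cone σ =>
      Finsupp.single (CCell.base σ) 1
        - (K.bdry σ).sum (fun ρ a => Finsupp.single (CCell.cone ρ) a)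
        - (if K.dim σ = 0 then Finsupp.single CCell.omega 1 else 0)

/-- The boundary of a chain of the cone `K̄`. -/
noncomputable def cbd (K : DeltaComplex F n) (c : CCell K.Cell →₀ F) : CCell K.Cell →₀ F :=
  c.sum fun x a => a • ccellBd K x

/-- The restriction `c ∩ K` of a cone chain to the base simplices, as a chain in `K`. -/
noncomputable def basePart (K : DeltaComplex F n) (c : CCell K.Cell →₀ F) : K.Cell →₀ F :=
  c.sum fun x a =>
    match x with
    | .base σ => Finsupp.single σ a
    | .omega => 0
    | .cone _ => 0

/-- The restriction `c ∩ (K̄ − K)` of a cone chain to the cells not in the base. -/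
noncomputable def conePart (K : DeltaComplex F n) (c : CCell K.Cell →₀ F) :
    CCell K.Cell →₀ F :=
  c.sum fun x a =>
    match x with
    | .base _ => 0
    | .omega => Finsupp.single CCell.omega a
    | .cone ρ => Finsupp.single (CCell.cone ρ) a

/-- The order of the cells of `K̄` in the cone filtration: base simplices by increasing
`min σ`, then `ω`, then cone simplices by decreasing `max σ`, ties broken consistently
so that every prefix is a subcomplex. -/
structure ConeOrder (K : DeltaComplex F n) where
  pos : CCell K.Cell → ℕ
  inj : Function.Injective pos
  base_lt_base : ∀ σ τ : K.Cell, K.tmin σ < K.tmin τ → pos (.base σ) < pos (.base τ)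
  base_lt_omega : ∀ σ : K.Cell, pos (.base σ) < pos .omega
  omega_lt_cone : ∀ σ : K.Cell, pos .omega < pos (.cone σ)
  cone_lt_cone : ∀ σ τ : K.Cell, K.tmax τ < K.tmax σ → pos (.cone σ) < pos (.cone τ)
  faces_first : ∀ x y, (ccellBd K x) y ≠ 0 → pos y < pos x

/-- `σ` is the pivot (lowest nonzero entry) of the column (chain) `c`. -/
def IsLow (K : DeltaComplex F n) (O : ConeOrder K) (c : CCell K.Cell →₀ F)
    (σ : CCell K.Cell) : Prop :=
  c σ ≠ 0 ∧ ∀ ρ, c ρ ≠ 0 → O.pos ρ ≤ O.pos σ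

/-- `R = DV` is a decomposition of the boundary matrix `D` of the cone filtration:
`V` is invertible upper-triangular and `R` is reduced (pivots of nonzero columns lie
in pairwise distinct rows). -/
structure IsReduction (K : DeltaComplex F n) (O : ConeOrder K)
    (R V : CCell K.Cell → (CCell K.Cell →₀ F)) : Prop where
  rdv : ∀ τ, R τ = cbd K (V τ)
  upper : ∀ τ ρ, (V τ) ρ ≠ 0 → O.pos ρ ≤ O.pos τ
  diag : ∀ τ, (V τ) τ ≠ 0
  reduced : ∀ τ τ' σ, τ ≠ τ' → IsLow K O (R τ) σ → ¬ IsLow K O (R τ') σ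

/-- One run of the lazy (standard left-to-right) reduction of the column of `τ`:
starting from a column `c` (with coefficient vector `v`), while the column is nonzero
and its pivot collides with the pivot of an earlier (already reduced) column, subtract
the appropriate scalar multiple of that column. -/
inductive LazyReduces (K : DeltaComplex F n) (O : ConeOrder K)
    (R V : CCell K.Cell → (CCell K.Cell →₀ F)) (τ : CCell K.Cell) :
    (CCell K.Cell →₀ F) → (CCell K.Cell →₀ F) →
      (CCell K.Cell →₀ F) → (CCell K.Cell →₀ F) → Prop
  | done (c v : CCell K.Cell →₀ F)
      (h : ∀ σ, IsLow K O c σ → ∀ τ', O.pos τ' < O.pos τ → ¬ IsLow K O (R τ') σ) :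
      LazyReduces K O R V τ c v c v
  | step (c v c' v' : CCell K.Cell →₀ F) (τ' σ : CCell K.Cell)
      (hlt : O.pos τ' < O.pos τ) (hc : IsLow K O c σ) (hr : IsLow K O (R τ') σ)
      (next : LazyReduces K O R V τ (c - (c σ / ((R τ') σ)) • R τ')
        (v - (c σ / ((R τ') σ)) • V τ') c' v') :
      LazyReduces K O R V τ c v c' v'

/-- `R = DV` is obtained by the lazy reduction: every column `R τ` (with coefficient
column `V τ`) is the result of the lazy reduction of the boundary column of `τ`,
columns being processed from left to right. -/
def IsLazyReduction (K : DeltaComplex F n) (O : ConeOrder K)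
    (R V : CCell K.Cell → (CCell K.Cell →₀ F)) : Prop :=
  ∀ τ, LazyReduces K O R V τ (ccellBd K τ) (Finsupp.single τ 1) (R τ) (V τ)

/-- Auxiliary invariant: the conclusion we propagate for a column `x` whose reduced
column has low (pivot) `l'`: every base cell `ρ'` of `V x` satisfies either
`tmin μ' < tmax ρ'` (when `l' = base μ'`), or `tmax μ ≤ tmax ρ'` (when `x = cone μ`). -/
def Conc (K : DeltaComplex F n) (x l' : CCell K.Cell) (ρ' : K.Cell) : Prop :=
  (∃ μ', l' = CCell.base μ' ∧ K.tmin μ' < K.tmax ρ') ∨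
  (∃ μ, x = CCell.cone μ ∧ K.tmax μ ≤ K.tmax ρ')

lemma aux_ent (K : DeltaComplex F n) (O : ConeOrder K)
    {R V : CCell K.Cell → (CCell K.Cell →₀ F)} {x : CCell K.Cell}
    {c v c' v' : CCell K.Cell →₀ F}
    (h : LazyReduces K O R V x c v c' v') :
    ∀ ρ, c' ρ ≠ 0 → ∃ ρ₀, c ρ₀ ≠ 0 ∧ O.pos ρ ≤ O.pos ρ₀ := by
  induction h with
  | done c v h => exact fun ρ hρ => ⟨ρ, hρ, le_refl _⟩
  | step c v c2 v2 τ' σ hlt hc hr next ih =>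
    intro ρ hρ
    obtain ⟨ρ₁, h1, h2⟩ := ih ρ hρ
    by_cases hcρ : c ρ₁ = 0
    · have hR : (R τ') ρ₁ ≠ 0 := by
        intro h0; apply h1
        simp [Finsupp.sub_apply, Finsupp.smul_apply, hcρ, h0]
      exact ⟨σ, hc.1, h2.trans (hr.2 _ hR)⟩
    · exact ⟨ρ₁, hcρ, h2⟩

lemma aux_convert (K : DeltaComplex F n) (O : ConeOrder K)
    {x τ' l' σ₀ : CCell K.Cell} {ρ' : K.Cell}
    (hlt : O.pos τ' < O.pos x) (hps : O.pos l' ≤ O.pos σ₀)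
    (hconc : Conc K τ' σ₀ ρ') : Conc K x l' ρ' := by
  rcases hconc with ⟨μ'', hσ₀, hlt2⟩ | ⟨μ₂, hτ', hle⟩
  · subst hσ₀
    cases l' with
    | base μ' =>
      refine Or.inl ⟨μ', rfl, lt_of_le_of_lt ?_ hlt2⟩
      by_contra hcon
      push_neg at hcon
      exact absurd (lt_of_lt_of_le (O.base_lt_base _ _ hcon) hps) (lt_irrefl _)
    | omega => exact absurd (lt_of_lt_of_le (O.base_lt_omega μ'') hps) (lt_irrefl _)
    | cone κ =>
      exact absurd (lt_of_lt_of_le ((O.base_lt_omega μ'').trans (O.omega_lt_cone κ)) hps)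
        (lt_irrefl _)
  · subst hτ'
    cases x with
    | base ν =>
      exact absurd (hlt.trans ((O.base_lt_omega ν).trans (O.omega_lt_cone μ₂)))
        (lt_irrefl _)
    | omega => exact absurd (hlt.trans (O.omega_lt_cone μ₂)) (lt_irrefl _)
    | cone μ =>
      refine Or.inr ⟨μ, rfl, le_trans ?_ hle⟩
      by_contra hcon
      push_neg at hcon
      exact absurd (hlt.trans (O.cone_lt_cone _ _ hcon)) (lt_irrefl _)

lemma aux_baseStart (K : DeltaComplex F n) (O : ConeOrder K)
    {R V : CCell K.Cell → (CCell K.Cell →₀ F)} (hRV : IsReduction K O R V)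
    (ν : K.Cell) {l' : CCell K.Cell}
    (hl : IsLow K O (R (CCell.base ν)) l') :
    ∃ μ', l' = CCell.base μ' ∧ K.tmin μ' < K.tmax ν := by
  have hVbase : ∀ ρ, (V (CCell.base ν)) ρ ≠ 0 → ∃ κ, ρ = CCell.base κ ∧ K.tmin κ ≤ K.tmin ν := by
    intro ρ hρ
    have hp := hRV.upper _ _ hρ
    cases ρ with
    | base κ =>
      refine ⟨κ, rfl, ?_⟩
      by_contra hcon
      push_neg at hcon
      exact absurd (lt_of_lt_of_le (O.base_lt_base _ _ hcon) hp) (lt_irrefl _)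
    | omega => exact absurd (lt_of_le_of_lt hp (O.base_lt_omega ν)) (lt_irrefl _)
    | cone κ =>
      exact absurd (lt_of_le_of_lt hp ((O.base_lt_omega ν).trans (O.omega_lt_cone κ)))
        (lt_irrefl _)
  have hR0 : (R (CCell.base ν)) l' ≠ 0 := hl.1
  rw [hRV.rdv] at hR0
  unfold cbd at hR0
  rw [Finsupp.sum_apply] at hR0
  obtain ⟨ρ, hρmem, hρne⟩ := Finset.exists_ne_zero_of_sum_ne_zero hR0
  have hρsupp : (V (CCell.base ν)) ρ ≠ 0 := Finsupp.mem_support_iff.mp hρmem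
  obtain ⟨κ, rfl, hκ⟩ := hVbase ρ hρsupp
  have hbd : (ccellBd K (CCell.base κ)) l' ≠ 0 := by
    intro h0; apply hρne
    simp [Finsupp.smul_apply, h0]
  have hmap : ccellBd K (CCell.base κ) = Finsupp.mapDomain CCell.base (K.bdry κ) := rfl
  rw [hmap] at hbd
  have hinj : Function.Injective (CCell.base : K.Cell → CCell K.Cell) := by
    intro a b h; injection h
  cases l' with
  | base μ' =>
    rw [Finsupp.mapDomain_apply hinj] at hbd
    exact ⟨μ', rfl, lt_of_lt_of_le (K.nest _ _ hbd).1
      (le_trans hκ (le_of_lt (K.tmin_lt_tmax ν)))⟩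
  | omega =>
    rw [Finsupp.mapDomain_notin_range] at hbd
    · exact absurd rfl hbd
    · rintro ⟨a, h⟩; cases h
  | cone κ' =>
    rw [Finsupp.mapDomain_notin_range] at hbd
    · exact absurd rfl hbd
    · rintro ⟨a, h⟩; cases h

lemma aux_key (K : DeltaComplex F n) (O : ConeOrder K)
    {R V : CCell K.Cell → (CCell K.Cell →₀ F)} (hRV : IsReduction K O R V)
    (hlazy : IsLazyReduction K O R V) :
    ∀ (N : ℕ) (x : CCell K.Cell), O.pos x < N → ∀ l', IsLow K O (R x) l' →
      ∀ ρ', (V x) (CCell.base ρ') ≠ 0 → Conc K x l' ρ' := by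
  intro N
  induction N with
  | zero => omega
  | succ N ih =>
    intro x hx l' hl ρ' hρ'
    have run : ∀ c v c' v', LazyReduces K O R V x c v c' v' → IsLow K O c' l' →
        (∀ ρ₂, v (CCell.base ρ₂) ≠ 0 → Conc K x l' ρ₂) →
        ∀ ρ₂, v' (CCell.base ρ₂) ≠ 0 → Conc K x l' ρ₂ := by
      intro c v c' v' h
      induction h with
      | done c v h => exact fun _ hs => hs
      | step c v c2 v2 τ' σ₀ hlt hc hr next ihrun =>
        intro hl' hs
        apply ihrun hl'
        intro ρ₂ hρ₂
        by_cases hv : v (CCell.base ρ₂) = 0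
        · have hVτ : (V τ') (CCell.base ρ₂) ≠ 0 := by
            intro h0; apply hρ₂
            simp [Finsupp.sub_apply, Finsupp.smul_apply, hv, h0]
          have hconc : Conc K τ' σ₀ ρ₂ := ih τ' (by omega) σ₀ hr ρ₂ hVτ
          have hps : O.pos l' ≤ O.pos σ₀ := by
            obtain ⟨ρ₀, h0, h1⟩ := aux_ent K O next l' hl'.1
            by_cases hcρ : c ρ₀ = 0
            · have hR : (R τ') ρ₀ ≠ 0 := by
                intro h0'; apply h0
                simp [Finsupp.sub_apply, Finsupp.smul_apply, hcρ, h0']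
              exact h1.trans (hr.2 _ hR)
            · exact h1.trans (hc.2 _ hcρ)
          exact aux_convert K O hlt hps hconc
        · exact hs ρ₂ hv
    refine run _ _ _ _ (hlazy x) hl ?_ ρ' hρ'
    intro ρ₂ hρ₂
    cases x with
    | base ν =>
      have hρν : CCell.base ρ₂ = CCell.base ν := by
        by_contra hne
        exact hρ₂ (Finsupp.single_eq_of_ne' (Ne.symm hne))
      have hρν' : ρ₂ = ν := by injection hρν
      obtain ⟨μ', hμeq, hμlt⟩ := aux_baseStart K O hRV ν hl
      exact Or.inl ⟨μ', hμeq, hρν' ▸ hμlt⟩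
    | omega =>
      exact absurd (Finsupp.single_eq_of_ne (by simp)) hρ₂
    | cone μ =>
      exact absurd (Finsupp.single_eq_of_ne (by simp)) hρ₂

/-- Claim (lazy reduction keeps `V[τ̄] ∩ K` above `b`): assume `R = DV` is obtained by the
lazy reduction, and let `(σ,τ̄)` be a persistence pair pairing a base simplex `σ` with a
cone simplex `τ̄ = ω∗τ`, with `min σ = d > b = max τ` (`low R[τ̄] = σ`). Then every base
simplex with nonzero coefficient in `V[τ̄]` lies in `K_{≥b}`. -/
theorem statement_17 {F : Type} [Field F] {n : ℤ} (K : DeltaComplex F n) (O : ConeOrder K)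
    (R V : CCell K.Cell → (CCell K.Cell →₀ F)) (hRV : IsReduction K O R V)
    (hlazy : IsLazyReduction K O R V)
    (σ τ : K.Cell) (b d : ℤ) (hd : K.tmin σ = d) (hb : K.tmax τ = b) (hbd : b < d)
    (hlow : IsLow K O (R (CCell.cone τ)) (CCell.base σ)) :
    ∀ ρ : K.Cell, (V (CCell.cone τ)) (CCell.base ρ) ≠ 0 → b ≤ K.tmax ρ := by
  intro ρ hρ
  have h := aux_key K O hRV hlazy (O.pos (CCell.cone τ) + 1) (CCell.cone τ)
    (by omega) (CCell.base σ) hlow ρ hρ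
  rcases h with ⟨μ', heq, hlt'⟩ | ⟨μ, heq, hle⟩
  · have : σ = μ' := by injection heq
    subst this
    omega
  · have : τ = μ := by injection heq
    subst this
    omega
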